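/- Let k be a field of characteristic p ≥ 3 and let r ≥ 1. Let C be the polynomial ring over k in the variables τ, θ, and σ_j for j ≥ 1, and let J be the ideal of C generated by τ², by θ^{p^{r−1}} − σ_1, and by σ_i σ_j − binom(i+j, i)·σ_{i+j} for all i, j ≥ 1 (where binom denotes the binomial coefficient reduced into k). Then the images in C/J of the monomials θ^i σ_j and τ θ^i σ_j, for 0 ≤ i < p^{r−1} and j ∈ ℕ (with σ_0 interpreted as 1), form a k-vector-space basis of C/J. -/

import Mathlib

open MvPolynomial

/-- The generators `σ_j` of the coordinate algebra `k[M_r]`: `σ_0 = 1` and, for `j ≥ 1`,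
`σ_j` is the polynomial variable indexed by `Sum.inr (j − 1)`.  The variable indexed by
`Sum.inl true` is `τ` and the one indexed by `Sum.inl false` is `θ`. -/
noncomputable def sig (k : Type) [Field k] (j : ℕ) : MvPolynomial (Bool ⊕ ℕ) k :=
  if j = 0 then 1 else X (Sum.inr (j - 1))

namespace Stmt8

def wt : Bool ⊕ ℕ → ℕ
  | Sum.inl _ => 0
  | Sum.inr n => n + 1

def J0 (u : (Bool ⊕ ℕ) →₀ ℕ) : ℕ := u.sum fun s e => wt s * e
def Dd (u : (Bool ⊕ ℕ) →₀ ℕ) : ℕ := u.prod fun s e => (wt s).factorial ^ e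

lemma J0_add (u v : (Bool ⊕ ℕ) →₀ ℕ) : J0 (u + v) = J0 u + J0 v :=
  Finsupp.sum_add_index (by simp) (by intros; ring)

lemma Dd_add (u v : (Bool ⊕ ℕ) →₀ ℕ) : Dd (u + v) = Dd u * Dd v :=
  Finsupp.prod_add_index (by simp) (by intros; rw [pow_add])

lemma J0_single (s : Bool ⊕ ℕ) (e : ℕ) : J0 (Finsupp.single s e) = wt s * e :=
  Finsupp.sum_single_index (by simp)

lemma Dd_single (s : Bool ⊕ ℕ) (e : ℕ) : Dd (Finsupp.single s e) = (wt s).factorial ^ e :=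
  Finsupp.prod_single_index (by simp)

lemma J0_zero : J0 (0 : (Bool ⊕ ℕ) →₀ ℕ) = 0 := Finsupp.sum_zero_index
lemma Dd_zero : Dd (0 : (Bool ⊕ ℕ) →₀ ℕ) = 1 := Finsupp.prod_zero_index

lemma pow_fact_dvd (a e : ℕ) : (a.factorial) ^ e ∣ (a * e).factorial := by
  induction e with
  | zero => simp
  | succ n ih =>
    rw [pow_succ, Nat.mul_succ]
    exact (mul_dvd_mul ih dvd_rfl).trans (Nat.factorial_mul_factorial_dvd_factorial_add _ _)

lemma Dd_dvd (u : (Bool ⊕ ℕ) →₀ ℕ) : Dd u ∣ (J0 u).factorial := by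
  have h1 : Dd u ∣ ∏ s ∈ u.support, (wt s * u s).factorial :=
    Finset.prod_dvd_prod_of_dvd _ _ fun s _ => pow_fact_dvd _ _
  exact h1.trans (Nat.prod_factorial_dvd_factorial_sum _ _)

lemma Dd_pos (u : (Bool ⊕ ℕ) →₀ ℕ) : 0 < Dd u :=
  Nat.pos_of_dvd_of_pos (Dd_dvd u) (Nat.factorial_pos _)

lemma key (D a b F : ℕ) (hD : 0 < D) (hdvd : D * (a + b).factorial ∣ F) :
    F / (D * (a.factorial * b.factorial)) =
      (a + b).choose a * (F / (D * (a + b).factorial)) := by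
  obtain ⟨E, hE⟩ := hdvd
  have hch : (a + b).choose a * a.factorial * b.factorial = (a + b).factorial := by
    have := Nat.choose_mul_factorial_mul_factorial (Nat.le_add_right a b)
    rwa [Nat.add_sub_cancel_left] at this
  have hpos : 0 < D * (a.factorial * b.factorial) :=
    Nat.mul_pos hD (Nat.mul_pos (Nat.factorial_pos _) (Nat.factorial_pos _))
  have hpos2 : 0 < D * (a + b).factorial := Nat.mul_pos hD (Nat.factorial_pos _)
  subst hE
  rw [Nat.mul_div_cancel_left E hpos2]
  calc D * (a + b).factorial * E / (D * (a.factorial * b.factorial))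
      = (a + b).choose a * E * (D * (a.factorial * b.factorial)) /
          (D * (a.factorial * b.factorial)) := by rw [← hch]; ring_nf
    _ = (a + b).choose a * E := Nat.mul_div_cancel _ hpos

/-- The normal form of a monomial exponent. -/
noncomputable def NF (k : Type) [Field k] (q : ℕ) (hq : 0 < q) (u : (Bool ⊕ ℕ) →₀ ℕ) :
    (Fin 2 × Fin q × ℕ) →₀ k :=
  if ht : u (Sum.inl true) < 2 then
    Finsupp.single (⟨u (Sum.inl true), ht⟩, ⟨u (Sum.inl false) % q, Nat.mod_lt _ hq⟩,
      J0 u + u (Sum.inl false) / q)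
      (((J0 u + u (Sum.inl false) / q).factorial / Dd u : ℕ) : k)
  else 0

variable {k : Type} [Field k] (q : ℕ) (hq : 0 < q)

lemma NF_tau (u : (Bool ⊕ ℕ) →₀ ℕ) :
    NF k q hq (u + Finsupp.single (Sum.inl true) 2) = 0 := by
  rw [NF, dif_neg]
  simp [Finsupp.add_apply, Finsupp.single_apply]

lemma NF_theta (u : (Bool ⊕ ℕ) →₀ ℕ) :
    NF k q hq (u + Finsupp.single (Sum.inl false) q) =
      NF k q hq (u + Finsupp.single (Sum.inr 0) 1) := by
  have e1 : ((u + Finsupp.single (Sum.inl false) q : (Bool ⊕ ℕ) →₀ ℕ)) (Sum.inl true)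
      = u (Sum.inl true) := by
    simp [Finsupp.add_apply, Finsupp.single_apply]
  have e2 : ((u + Finsupp.single (Sum.inr 0) 1 : (Bool ⊕ ℕ) →₀ ℕ)) (Sum.inl true)
      = u (Sum.inl true) := by
    simp [Finsupp.add_apply, Finsupp.single_apply]
  have f1 : ((u + Finsupp.single (Sum.inl false) q : (Bool ⊕ ℕ) →₀ ℕ)) (Sum.inl false)
      = u (Sum.inl false) + q := by
    simp [Finsupp.add_apply, Finsupp.single_apply]
  have f2 : ((u + Finsupp.single (Sum.inr 0) 1 : (Bool ⊕ ℕ) →₀ ℕ)) (Sum.inl false)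
      = u (Sum.inl false) := by
    simp [Finsupp.add_apply, Finsupp.single_apply]
  have j1 : J0 (u + Finsupp.single (Sum.inl false) q) = J0 u := by
    rw [J0_add, J0_single]; simp [wt]
  have j2 : J0 (u + Finsupp.single (Sum.inr 0) 1) = J0 u + 1 := by
    rw [J0_add, J0_single]; simp [wt]
  have d1 : Dd (u + Finsupp.single (Sum.inl false) q) = Dd u := by
    rw [Dd_add, Dd_single]; simp [wt]
  have d2 : Dd (u + Finsupp.single (Sum.inr 0) 1) = Dd u := by
    rw [Dd_add, Dd_single]; simp [wt, Nat.factorial]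
  rw [NF, NF]
  by_cases ht : u (Sum.inl true) < 2
  · rw [dif_pos (by rw [e1]; exact ht), dif_pos (by rw [e2]; exact ht)]
    congr 1
    · ext
      · simp [e1, e2]
      · simp [f1, f2, Nat.add_mod_right]
      · simp [j1, j2, f1, f2, Nat.add_div_right _ hq]; ring
    · rw [j1, j2, f1, f2, d1, d2, Nat.add_div_right _ hq]
      ring_nf
  · rw [dif_neg (by rw [e1]; exact ht), dif_neg (by rw [e2]; exact ht)]

lemma NF_sigma (u : (Bool ⊕ ℕ) →₀ ℕ) (i j : ℕ) (hi : 1 ≤ i) (hj : 1 ≤ j) :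
    NF k q hq (u + Finsupp.single (Sum.inr (i - 1)) 1 + Finsupp.single (Sum.inr (j - 1)) 1) =
      (((i + j).choose i : k)) • NF k q hq (u + Finsupp.single (Sum.inr (i + j - 1)) 1) := by
  set v1 := u + Finsupp.single (Sum.inr (i - 1)) 1 + Finsupp.single (Sum.inr (j - 1)) 1 with hv1
  set v2 := u + Finsupp.single (Sum.inr (i + j - 1)) 1 with hv2
  have wi : wt (Sum.inr (i - 1)) = i := by simp [wt]; omega
  have wj : wt (Sum.inr (j - 1)) = j := by simp [wt]; omega
  have wij : wt (Sum.inr (i + j - 1)) = i + j := by simp [wt]; omega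
  have e1 : v1 (Sum.inl true) = u (Sum.inl true) := by
    simp [hv1, Finsupp.add_apply, Finsupp.single_apply]
  have e2 : v2 (Sum.inl true) = u (Sum.inl true) := by
    simp [hv2, Finsupp.add_apply, Finsupp.single_apply]
  have f1 : v1 (Sum.inl false) = u (Sum.inl false) := by
    simp [hv1, Finsupp.add_apply, Finsupp.single_apply]
  have f2 : v2 (Sum.inl false) = u (Sum.inl false) := by
    simp [hv2, Finsupp.add_apply, Finsupp.single_apply]
  have j1 : J0 v1 = J0 u + (i + j) := by
    rw [hv1, J0_add, J0_add, J0_single, J0_single, wi, wj]; ring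
  have j2 : J0 v2 = J0 u + (i + j) := by
    rw [hv2, J0_add, J0_single, wij]; ring
  have d1 : Dd v1 = Dd u * (i.factorial * j.factorial) := by
    rw [hv1, Dd_add, Dd_add, Dd_single, Dd_single, wi, wj]; ring
  have d2 : Dd v2 = Dd u * (i + j).factorial := by
    rw [hv2, Dd_add, Dd_single, wij]; ring
  have hdvd : Dd u * (i + j).factorial ∣
      (J0 u + (i + j) + u (Sum.inl false) / q).factorial := by
    refine (mul_dvd_mul (Dd_dvd u) dvd_rfl).trans ?_
    refine (Nat.factorial_mul_factorial_dvd_factorial_add _ _).trans ?_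
    exact Nat.factorial_dvd_factorial (Nat.le_add_right _ _)
  rw [NF, NF]
  by_cases ht : u (Sum.inl true) < 2
  · rw [dif_pos (by rw [e1]; exact ht), dif_pos (by rw [e2]; exact ht)]
    rw [Finsupp.smul_single]
    congr 1
    · ext
      · simp [e1, e2]
      · simp [f1, f2]
      · simp [j1, j2, f1, f2]
    · rw [j1, j2, f1, f2, d1, d2, key (Dd u) i j _ (Dd_pos u) hdvd]
      push_cast
      rw [smul_eq_mul]
  · rw [dif_neg (by rw [e1]; exact ht), dif_neg (by rw [e2]; exact ht), smul_zero]

noncomputable def U (q : ℕ) (e : Fin 2 × Fin q × ℕ) : (Bool ⊕ ℕ) →₀ ℕ :=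
  Finsupp.single (Sum.inl true) (e.1 : ℕ) + Finsupp.single (Sum.inl false) ((e.2.1 : Fin q) : ℕ) +
    (if e.2.2 = 0 then 0 else Finsupp.single (Sum.inr (e.2.2 - 1)) 1)

lemma NF_U (e : Fin 2 × Fin q × ℕ) : NF k q hq (U q e) = Finsupp.single e 1 := by
  obtain ⟨⟨t, htlt⟩, ⟨h, hhlt⟩, j⟩ := e
  set u := U q (⟨t, htlt⟩, ⟨h, hhlt⟩, j) with hu
  have hsplit : u = Finsupp.single (Sum.inl true) t + Finsupp.single (Sum.inl false) h +
      (if j = 0 then 0 else Finsupp.single (Sum.inr (j - 1)) 1) := rfl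
  have e1 : u (Sum.inl true) = t := by
    rcases Nat.eq_zero_or_pos j with hj | hj <;>
      simp [hsplit, hj, Nat.pos_iff_ne_zero.mp, Finsupp.add_apply, Finsupp.single_apply]
  have f1 : u (Sum.inl false) = h := by
    rcases Nat.eq_zero_or_pos j with hj | hj <;>
      simp [hsplit, hj, Nat.pos_iff_ne_zero.mp, Finsupp.add_apply, Finsupp.single_apply]
  have j1 : J0 u = j := by
    rcases Nat.eq_zero_or_pos j with hj | hj
    · simp [hsplit, hj, J0_add, J0_single, J0_zero, wt]
    · rw [hsplit, if_neg (by omega), J0_add, J0_add, J0_single, J0_single, J0_single]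
      simp [wt]; omega
  have d1 : Dd u = j.factorial := by
    rcases Nat.eq_zero_or_pos j with hj | hj
    · simp [hsplit, hj, Dd_add, Dd_single, Dd_zero, wt, Nat.factorial]
    · rw [hsplit, if_neg (by omega), Dd_add, Dd_add, Dd_single, Dd_single, Dd_single]
      have hj1 : j - 1 + 1 = j := by omega
      simp [wt, hj1]
  rw [NF, dif_pos (by rw [e1]; exact htlt)]
  congr 1
  · ext
    · simp [e1]
    · simp [f1, Nat.mod_eq_of_lt hhlt]
    · simp [j1, f1, Nat.div_eq_of_lt hhlt]
  · rw [j1, f1, d1, Nat.div_eq_of_lt hhlt]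
    simp [Nat.div_self (Nat.factorial_pos j)]

/-- The normal-form linear map. -/
noncomputable def phi (k : Type) [Field k] (q : ℕ) (hq : 0 < q) :
    MvPolynomial (Bool ⊕ ℕ) k →ₗ[k] ((Fin 2 × Fin q × ℕ) →₀ k) :=
  (MvPolynomial.basisMonomials (Bool ⊕ ℕ) k).constr k (NF k q hq)

lemma phi_monomial (u : (Bool ⊕ ℕ) →₀ ℕ) (a : k) :
    phi k q hq (monomial u a) = a • NF k q hq u := by
  have h1 : (monomial u a : MvPolynomial (Bool ⊕ ℕ) k) = a • monomial u 1 := by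
    rw [smul_monomial, smul_eq_mul, mul_one]
  rw [h1, map_smul]
  congr 1
  have h2 := (MvPolynomial.basisMonomials (Bool ⊕ ℕ) k).constr_basis k (NF k q hq) u
  have h3 : (MvPolynomial.basisMonomials (Bool ⊕ ℕ) k) u = monomial u 1 :=
    congrFun (MvPolynomial.coe_basisMonomials _ _) u
  rw [phi, ← h3, h2]

lemma sig_pos {j : ℕ} (hj : 1 ≤ j) :
    sig k j = (monomial (Finsupp.single (Sum.inr (j - 1)) 1) 1 : MvPolynomial (Bool ⊕ ℕ) k) := by
  rw [sig, if_neg (by omega), X]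

lemma mono_eq (e : Fin 2 × Fin q × ℕ) :
    (monomial (U q e) 1 : MvPolynomial (Bool ⊕ ℕ) k) =
      X (Sum.inl true) ^ ((e.1 : ℕ)) * X (Sum.inl false) ^ ((e.2.1 : ℕ)) * sig k e.2.2 := by
  obtain ⟨t, h, j⟩ := e
  rcases Nat.eq_zero_or_pos j with hj | hj
  · simp only [U, hj, if_pos, sig, add_zero]
    rw [X_pow_eq_monomial, X_pow_eq_monomial, monomial_mul, mul_one, mul_one]
  · rw [U]
    simp only [if_neg (by omega : ¬ j = 0)]
    rw [sig_pos hj, X_pow_eq_monomial, X_pow_eq_monomial, monomial_mul, monomial_mul,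
      mul_one, mul_one]

lemma phi_gen_tau (u : (Bool ⊕ ℕ) →₀ ℕ) :
    phi k q hq (monomial u 1 * (X (Sum.inl true) ^ 2)) = 0 := by
  rw [X_pow_eq_monomial, monomial_mul, mul_one, phi_monomial, NF_tau, smul_zero]

lemma phi_gen_theta (u : (Bool ⊕ ℕ) →₀ ℕ) :
    phi k q hq (monomial u 1 * (X (Sum.inl false) ^ q - sig k 1)) = 0 := by
  rw [mul_sub, X_pow_eq_monomial, monomial_mul, mul_one, sig_pos le_rfl,
    monomial_mul, mul_one, map_sub, phi_monomial, phi_monomial, one_smul, one_smul]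
  simp only [Nat.sub_self]
  rw [NF_theta q hq u, sub_self]

lemma phi_gen_sigma (u : (Bool ⊕ ℕ) →₀ ℕ) (i j : ℕ) (hi : 1 ≤ i) (hj : 1 ≤ j) :
    phi k q hq (monomial u 1 *
      (sig k i * sig k j - C (((i + j).choose i : k)) * sig k (i + j))) = 0 := by
  rw [mul_sub, sig_pos hi, sig_pos hj,
    sig_pos (le_trans hi (Nat.le_add_right _ _)),
    C_mul_monomial, monomial_mul, monomial_mul, monomial_mul, mul_one, mul_one, mul_one,
    map_sub, phi_monomial, phi_monomial, one_smul, ← add_assoc,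
    NF_sigma q hq u i j hi hj, one_mul, sub_self]

lemma phi_mul_gen_zero (g : MvPolynomial (Bool ⊕ ℕ) k)
    (hg : ∀ u : (Bool ⊕ ℕ) →₀ ℕ, phi k q hq (monomial u 1 * g) = 0) :
    ∀ pl : MvPolynomial (Bool ⊕ ℕ) k, phi k q hq (pl * g) = 0 := by
  intro pl
  induction pl using MvPolynomial.induction_on' with
  | monomial u a =>
    have h0 : (monomial u a : MvPolynomial (Bool ⊕ ℕ) k) = a • monomial u 1 := by
      rw [smul_monomial, smul_eq_mul, mul_one]
    rw [h0, smul_mul_assoc, map_smul, hg, smul_zero]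
  | add p1 p2 hp1 hp2 => rw [add_mul, map_add, hp1, hp2, add_zero]

end Stmt8

open Stmt8

set_option maxHeartbeats 1000000

/-- Basis of the coordinate algebra `k[M_r] = C/J`, where `C` is the polynomial ring on
`τ`, `θ`, and `σ_j` (`j ≥ 1`) and `J` is generated by `τ²`, `θ^{p^{r−1}} − σ_1`, and
`σ_i σ_j − binom(i+j, i)·σ_{i+j}`: the images of the monomials `τ^ε θ^i σ_j` for
`ε ∈ {0,1}`, `0 ≤ i < p^{r−1}`, `j ∈ ℕ` form a `k`-vector-space basis. -/
theorem statement8 {k : Type} [Field k] (p : ℕ) (hp : Nat.Prime p) (hp3 : 3 ≤ p)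
    (hchar : CharP k p) (r : ℕ) (hr : 1 ≤ r)
    (J : Ideal (MvPolynomial (Bool ⊕ ℕ) k))
    (hJ : J = Ideal.span
      ({X (Sum.inl true) ^ 2, X (Sum.inl false) ^ p ^ (r - 1) - sig k 1} ∪
        {q | ∃ i j : ℕ, 1 ≤ i ∧ 1 ≤ j ∧
          q = sig k i * sig k j - C ((Nat.choose (i + j) i : k)) * sig k (i + j)}))
    (fam : Fin 2 × Fin (p ^ (r - 1)) × ℕ → MvPolynomial (Bool ⊕ ℕ) k ⧸ J)
    (hfam : ∀ e, fam e = Ideal.Quotient.mk J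
      (X (Sum.inl true) ^ ((e.1 : ℕ)) * X (Sum.inl false) ^ ((e.2.1 : ℕ)) * sig k e.2.2)) :
    LinearIndependent k fam ∧ Submodule.span k (Set.range fam) = ⊤ := by
  have hq : 0 < p ^ (r - 1) := pow_pos hp.pos _
  -- the kernel property
  have hker : ∀ x ∈ J, phi k (p ^ (r - 1)) hq x = 0 := by
    intro x hx
    let K : Ideal (MvPolynomial (Bool ⊕ ℕ) k) :=
      { carrier := {y | ∀ pl, phi k (p ^ (r - 1)) hq (pl * y) = 0}
        add_mem' := fun {a b} ha hb pl => by rw [mul_add, map_add, ha pl, hb pl, add_zero]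
        zero_mem' := fun pl => by rw [mul_zero, map_zero]
        smul_mem' := fun c y hy pl => by
          rw [smul_eq_mul, ← mul_assoc]; exact hy _ }
    have hJle : J ≤ K := by
      rw [hJ]
      refine Ideal.span_le.mpr ?_
      rintro g hg
      rcases hg with hg | hg
      · simp only [Set.mem_insert_iff, Set.mem_singleton_iff] at hg
        rcases hg with rfl | rfl
        · exact phi_mul_gen_zero _ hq _ (phi_gen_tau _ hq)
        · exact phi_mul_gen_zero _ hq _ (phi_gen_theta _ hq)
      · obtain ⟨i, j, hi, hj, rfl⟩ := hg
        exact phi_mul_gen_zero _ hq _ (fun u => phi_gen_sigma _ hq u i j hi hj)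
    have := hJle hx 1
    rwa [one_mul] at this
  have hmk : ∀ (c : k) (y : MvPolynomial (Bool ⊕ ℕ) k),
      Ideal.Quotient.mk J (c • y) = c • Ideal.Quotient.mk J y := fun c y => by
    have h := map_smul (Ideal.Quotient.mkₐ k J) c y
    rwa [Ideal.Quotient.mkₐ_eq_mk] at h
  constructor
  · rw [linearIndependent_iff]
    intro l hl
    set P := l.sum fun e c => (monomial (U (p ^ (r - 1)) e) c : MvPolynomial (Bool ⊕ ℕ) k)
      with hP
    have hmkP : Ideal.Quotient.mk J P = Finsupp.linearCombination k fam l := by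
      rw [hP, map_finsuppSum, Finsupp.linearCombination_apply]
      refine Finsupp.sum_congr fun e _ => ?_
      rw [hfam e, ← mono_eq (p ^ (r - 1)) e]
      have h0 : (monomial (U (p ^ (r - 1)) e) (l e) : MvPolynomial (Bool ⊕ ℕ) k)
          = l e • monomial (U (p ^ (r - 1)) e) 1 := by
        rw [smul_monomial, smul_eq_mul, mul_one]
      rw [h0, hmk]
    have hPJ : P ∈ J := by
      rw [← Ideal.Quotient.eq_zero_iff_mem, hmkP, hl]
    have h2 : phi k (p ^ (r - 1)) hq P = 0 := hker P hPJ
    rw [hP, map_finsuppSum] at h2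
    have h3 : (l.sum fun e c => phi k (p ^ (r - 1)) hq (monomial (U (p ^ (r - 1)) e) c)) = l := by
      have h4 : (l.sum fun e c => phi k (p ^ (r - 1)) hq (monomial (U (p ^ (r - 1)) e) c))
          = l.sum fun e c => Finsupp.single e c :=
        Finsupp.sum_congr fun e _ => by
          rw [phi_monomial, NF_U, Finsupp.smul_single, smul_eq_mul, mul_one]
      rw [h4, Finsupp.sum_single]
    rw [h3] at h2
    exact h2
  · rw [eq_top_iff]
    rintro x -
    obtain ⟨P, rfl⟩ := Ideal.Quotient.mk_surjective x
    have hmk_eq : ∀ a b : MvPolynomial (Bool ⊕ ℕ) k, a - b ∈ J →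
        Ideal.Quotient.mk J a = Ideal.Quotient.mk J b := fun a b h =>
      (Ideal.Quotient.mk_eq_mk_iff_sub_mem a b).mpr h
    have hCs : ∀ (c : k) (y : MvPolynomial (Bool ⊕ ℕ) k),
        Ideal.Quotient.mk J (C c * y) = c • Ideal.Quotient.mk J y := fun c y => by
      rw [← MvPolynomial.smul_eq_C_mul, hmk]
    have hg1 : (X (Sum.inl true) ^ 2 : MvPolynomial (Bool ⊕ ℕ) k) ∈ J := by
      rw [hJ]; exact Ideal.subset_span (Or.inl (Set.mem_insert _ _))
    have hg2 : (X (Sum.inl false) ^ p ^ (r - 1) - sig k 1 : MvPolynomial (Bool ⊕ ℕ) k) ∈ J := by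
      rw [hJ]; exact Ideal.subset_span (Or.inl (Set.mem_insert_of_mem _ rfl))
    have hg3 : ∀ i j : ℕ, 1 ≤ i → 1 ≤ j →
        (sig k i * sig k j - C ((Nat.choose (i + j) i : k)) * sig k (i + j) :
          MvPolynomial (Bool ⊕ ℕ) k) ∈ J :=
      fun i j hi hj => by rw [hJ]; exact Ideal.subset_span (Or.inr ⟨i, j, hi, hj, rfl⟩)
    have hsig0 : (sig k 0 : MvPolynomial (Bool ⊕ ℕ) k) = 1 := by rw [sig, if_pos rfl]
    have hfam' : ∀ (t : ℕ) (ht : t < 2) (i : ℕ) (hi : i < p ^ (r - 1)) (j : ℕ),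
        fam (⟨t, ht⟩, ⟨i, hi⟩, j)
          = Ideal.Quotient.mk J (X (Sum.inl true) ^ t * X (Sum.inl false) ^ i * sig k j) := by
      intro t ht i hi j; rw [hfam]
    have hbase : ∀ (e : Fin 2 × Fin (p ^ (r - 1)) × ℕ) (s : Bool ⊕ ℕ),
        fam e * Ideal.Quotient.mk J (X s) ∈ Submodule.span k (Set.range fam) := by
      rintro ⟨⟨t, ht⟩, ⟨i, hilt⟩, j⟩ (b | n)
      · cases b
        · -- θ
          rw [hfam' t ht i hilt j, ← map_mul]
          by_cases hlt : i + 1 < p ^ (r - 1)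
          · have heq : Ideal.Quotient.mk J
                (X (Sum.inl true) ^ t * X (Sum.inl false) ^ i * sig k j * X (Sum.inl false))
                = fam (⟨t, ht⟩, ⟨i + 1, hlt⟩, j) := by
              rw [hfam' t ht (i + 1) hlt j]; congr 1; ring
            rw [heq]; exact Submodule.subset_span ⟨_, rfl⟩
          · have hiq : i + 1 = p ^ (r - 1) := by omega
            have heq1 : Ideal.Quotient.mk J
                (X (Sum.inl true) ^ t * X (Sum.inl false) ^ i * sig k j * X (Sum.inl false))
                = Ideal.Quotient.mk J (X (Sum.inl true) ^ t * (sig k 1 * sig k j)) := by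
              apply hmk_eq
              have heq0 : (X (Sum.inl true) ^ t * X (Sum.inl false) ^ i * sig k j *
                    X (Sum.inl false)
                  - X (Sum.inl true) ^ t * (sig k 1 * sig k j) : MvPolynomial (Bool ⊕ ℕ) k)
                  = (X (Sum.inl false) ^ p ^ (r - 1) - sig k 1)
                    * (X (Sum.inl true) ^ t * sig k j) := by
                rw [← hiq]; ring
              rw [heq0]
              exact Ideal.mul_mem_right _ _ hg2
            rw [heq1]
            rcases Nat.eq_zero_or_pos j with hj | hj
            · subst hj
              have heq2 : Ideal.Quotient.mk J (X (Sum.inl true) ^ t * (sig k 1 * sig k 0))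
                  = fam (⟨t, ht⟩, ⟨0, hq⟩, 1) := by
                rw [hfam' t ht 0 hq 1]; congr 1
                rw [hsig0]; ring
              rw [heq2]; exact Submodule.subset_span ⟨_, rfl⟩
            · have heq2 : Ideal.Quotient.mk J (X (Sum.inl true) ^ t * (sig k 1 * sig k j))
                  = Ideal.Quotient.mk J (C ((Nat.choose (1 + j) 1 : k))
                    * (X (Sum.inl true) ^ t * X (Sum.inl false) ^ 0 * sig k (1 + j))) := by
                apply hmk_eq
                have heq0 : (X (Sum.inl true) ^ t * (sig k 1 * sig k j)
                    - C ((Nat.choose (1 + j) 1 : k))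
                      * (X (Sum.inl true) ^ t * X (Sum.inl false) ^ 0 * sig k (1 + j))
                    : MvPolynomial (Bool ⊕ ℕ) k)
                    = (sig k 1 * sig k j - C ((Nat.choose (1 + j) 1 : k)) * sig k (1 + j))
                      * (X (Sum.inl true) ^ t) := by ring
                rw [heq0]
                exact Ideal.mul_mem_right _ _ (hg3 1 j le_rfl hj)
              rw [heq2, hCs, ← hfam' t ht 0 hq (1 + j)]
              exact Submodule.smul_mem _ _ (Submodule.subset_span ⟨_, rfl⟩)
        · -- τ
          rw [hfam' t ht i hilt j, ← map_mul]
          interval_cases t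
          · have heq : Ideal.Quotient.mk J
                (X (Sum.inl true) ^ 0 * X (Sum.inl false) ^ i * sig k j * X (Sum.inl true))
                = fam (⟨1, one_lt_two⟩, ⟨i, hilt⟩, j) := by
              rw [hfam' 1 one_lt_two i hilt j]; congr 1; ring
            rw [heq]; exact Submodule.subset_span ⟨_, rfl⟩
          · have heq : Ideal.Quotient.mk J
                (X (Sum.inl true) ^ 1 * X (Sum.inl false) ^ i * sig k j * X (Sum.inl true))
                = 0 := by
              rw [Ideal.Quotient.eq_zero_iff_mem]
              have heq0 : (X (Sum.inl true) ^ 1 * X (Sum.inl false) ^ i * sig k j *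
                  X (Sum.inl true) : MvPolynomial (Bool ⊕ ℕ) k)
                  = X (Sum.inl true) ^ 2 * (X (Sum.inl false) ^ i * sig k j) := by ring
              rw [heq0]
              exact Ideal.mul_mem_right _ _ hg1
            rw [heq]; exact Submodule.zero_mem _
      · -- σ_{n+1}
        rw [hfam' t ht i hilt j, ← map_mul]
        have hXn : (X (Sum.inr n) : MvPolynomial (Bool ⊕ ℕ) k) = sig k (n + 1) := by
          rw [sig, if_neg (Nat.succ_ne_zero n), Nat.add_sub_cancel]
        rcases Nat.eq_zero_or_pos j with hj | hj
        · subst hj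
          have heq : Ideal.Quotient.mk J
              (X (Sum.inl true) ^ t * X (Sum.inl false) ^ i * sig k 0 * X (Sum.inr n))
              = fam (⟨t, ht⟩, ⟨i, hilt⟩, n + 1) := by
            rw [hfam' t ht i hilt (n + 1)]; congr 1
            rw [hXn, hsig0]; ring
          rw [heq]; exact Submodule.subset_span ⟨_, rfl⟩
        · have heq : Ideal.Quotient.mk J
              (X (Sum.inl true) ^ t * X (Sum.inl false) ^ i * sig k j * X (Sum.inr n))
              = Ideal.Quotient.mk J (C ((Nat.choose (j + (n + 1)) j : k))
                * (X (Sum.inl true) ^ t * X (Sum.inl false) ^ i * sig k (j + (n + 1)))) := by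
            apply hmk_eq
            have heq0 : (X (Sum.inl true) ^ t * X (Sum.inl false) ^ i * sig k j * X (Sum.inr n)
                - C ((Nat.choose (j + (n + 1)) j : k))
                  * (X (Sum.inl true) ^ t * X (Sum.inl false) ^ i * sig k (j + (n + 1)))
                : MvPolynomial (Bool ⊕ ℕ) k)
                = (sig k j * sig k (n + 1)
                    - C ((Nat.choose (j + (n + 1)) j : k)) * sig k (j + (n + 1)))
                  * (X (Sum.inl true) ^ t * X (Sum.inl false) ^ i) := by
              rw [hXn]; ring
            rw [heq0]
            exact Ideal.mul_mem_right _ _ (hg3 j (n + 1) hj (Nat.succ_le_succ (Nat.zero_le n)))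
          rw [heq, hCs, ← hfam' t ht i hilt (j + (n + 1))]
          exact Submodule.smul_mem _ _ (Submodule.subset_span ⟨_, rfl⟩)
    have hmul : ∀ (s : Bool ⊕ ℕ), ∀ x ∈ Submodule.span k (Set.range fam),
        x * Ideal.Quotient.mk J (X s) ∈ Submodule.span k (Set.range fam) := by
      intro s x hx
      induction hx using Submodule.span_induction with
      | mem x h => obtain ⟨e, rfl⟩ := h; exact hbase e s
      | zero => rw [zero_mul]; exact Submodule.zero_mem _
      | add a b _ _ ha hb => rw [add_mul]; exact Submodule.add_mem _ ha hb
      | smul c a _ ha => rw [smul_mul_assoc]; exact Submodule.smul_mem _ _ ha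
    induction P using MvPolynomial.induction_on with
    | C a =>
      have h1 : fam (⟨0, two_pos⟩, ⟨0, hq⟩, 0) = 1 := by
        rw [hfam' 0 two_pos 0 hq 0, hsig0]
        simp
      have h2 : Ideal.Quotient.mk J (C a) = a • fam (⟨0, two_pos⟩, ⟨0, hq⟩, 0) := by
        rw [h1, show (C a : MvPolynomial (Bool ⊕ ℕ) k) = C a * 1 from (mul_one _).symm,
          hCs, map_one]
      rw [h2]; exact Submodule.smul_mem _ _ (Submodule.subset_span ⟨_, rfl⟩)
    | add p1 p2 hp1 hp2 => rw [map_add]; exact Submodule.add_mem _ hp1 hp2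
    | mul_X p1 n hp1 => rw [map_mul]; exact hmul n _ hp1
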